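/- Let f : ℝ^d → ℂ be bounded, ψ : [0,∞) → [0,∞) increasing with ψ(r) → ∞, and let u : ℝ^d → ℂ be bounded and continuous with u(0) = 1. Then for every ε > 0 there exists h > 0 (which may be taken smaller than any prescribed positive bound) such that sup_{λ∈ℝ^d} |f(λ) − f(λ)u(hλ)| e^{-ψ(‖λ‖)} < ε. -/

import Mathlib

/-- Multiplying by a dilated bump Fourier transform `u(hλ)` with `u(0)=1` changes
a bounded `f` by an arbitrarily small amount in the `‖·‖_ψ` norm, with `h` as
small as prescribed. -/
theorem stmt13 (d : ℕ) (ψ : ℝ → ℝ) (hψ0 : ∀ r, 0 ≤ r → 0 ≤ ψ r)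
    (hmono : MonotoneOn ψ (Set.Ici 0))
    (htop : Filter.Tendsto ψ Filter.atTop Filter.atTop)
    (f : EuclideanSpace ℝ (Fin d) → ℂ) (hfb : ∃ B : ℝ, ∀ x, ‖f x‖ ≤ B)
    (u : EuclideanSpace ℝ (Fin d) → ℂ) (huc : Continuous u)
    (hub : ∃ B : ℝ, ∀ x, ‖u x‖ ≤ B) (hu0 : u 0 = 1)
    (ε : ℝ) (hε : 0 < ε) (h₀ : ℝ) (hh₀ : 0 < h₀) :
    ∃ h : ℝ, 0 < h ∧ h < h₀ ∧
      ∀ lam : EuclideanSpace ℝ (Fin d),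
        ‖f lam - f lam * u (h • lam)‖ * Real.exp (-ψ ‖lam‖) < ε := by
  obtain ⟨B₀, hB₀⟩ := hfb
  obtain ⟨Bu₀, hBu₀⟩ := hub
  set B : ℝ := max B₀ 0 with hBdef
  set Bu : ℝ := max Bu₀ 0 with hBudef
  have hfB : ∀ x, ‖f x‖ ≤ B := fun x => (hB₀ x).trans (le_max_left _ _)
  have huB : ∀ x, ‖u x‖ ≤ Bu := fun x => (hBu₀ x).trans (le_max_left _ _)
  have hB0 : 0 ≤ B := le_max_right _ _
  have hBu0 : 0 ≤ Bu := le_max_right _ _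
  set K : ℝ := B * (1 + Bu) + 1 with hKdef
  have hK : 0 < K := by positivity
  set C : ℝ := Real.log (K / ε) + 1 with hCdef
  have hexpC : K * Real.exp (-C) < ε := by
    have h1 : Real.exp (-C) = (ε / K) * Real.exp (-1) := by
      rw [hCdef, neg_add, Real.exp_add, ← Real.log_inv, Real.exp_log (by positivity),
        inv_div]
    rw [h1]
    calc K * (ε / K * Real.exp (-1)) = ε * Real.exp (-1) := by
          field_simp
      _ < ε * 1 := by
          apply mul_lt_mul_of_pos_left _ hε
          exact Real.exp_lt_one_iff.mpr (by norm_num)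
      _ = ε := mul_one ε
  -- choose R from htop
  obtain ⟨R, hR⟩ := Filter.eventually_atTop.mp (htop.eventually_ge_atTop C)
  set M : ℝ := max R 1 with hMdef
  have hM0 : 0 < M := lt_of_lt_of_le one_pos (le_max_right _ _)
  -- continuity at 0
  have hcont : ContinuousAt u 0 := huc.continuousAt
  have hεB : 0 < ε / (B + 1) := by positivity
  obtain ⟨δ, hδ0, hδ⟩ := Metric.continuousAt_iff.mp hcont (ε / (B + 1)) hεB
  refine ⟨min (h₀ / 2) (δ / (2 * M)), by positivity, ?_, ?_⟩
  · exact lt_of_le_of_lt (min_le_left _ _) (by linarith)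
  intro lam
  set h : ℝ := min (h₀ / 2) (δ / (2 * M)) with hhdef
  have hh0 : 0 < h := by positivity
  have hnorm0 : (0:ℝ) ≤ ‖lam‖ := norm_nonneg _
  have hψlam : 0 ≤ ψ ‖lam‖ := hψ0 _ hnorm0
  have hbound : ‖f lam - f lam * u (h • lam)‖ ≤ B * ‖1 - u (h • lam)‖ := by
    have : f lam - f lam * u (h • lam) = f lam * (1 - u (h • lam)) := by ring
    rw [this, norm_mul]
    exact mul_le_mul_of_nonneg_right (hfB lam) (norm_nonneg _)
  by_cases hcase : M ≤ ‖lam‖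
  · -- large λ
    have hψge : C ≤ ψ ‖lam‖ := hR _ (le_trans (le_max_left _ _) hcase)
    have hexp : Real.exp (-ψ ‖lam‖) ≤ Real.exp (-C) :=
      Real.exp_le_exp.mpr (by linarith)
    have h1 : ‖1 - u (h • lam)‖ ≤ 1 + Bu := by
      calc ‖1 - u (h • lam)‖ ≤ ‖(1:ℂ)‖ + ‖u (h • lam)‖ := norm_sub_le _ _
        _ ≤ 1 + Bu := by rw [norm_one]; linarith [huB (h • lam)]
    calc ‖f lam - f lam * u (h • lam)‖ * Real.exp (-ψ ‖lam‖)
        ≤ (B * (1 + Bu)) * Real.exp (-C) := by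
          apply mul_le_mul (hbound.trans (mul_le_mul_of_nonneg_left h1 hB0)) hexp
            (Real.exp_pos _).le (by positivity)
      _ ≤ K * Real.exp (-C) := by
          apply mul_le_mul_of_nonneg_right _ (Real.exp_pos _).le
          rw [hKdef]; linarith
      _ < ε := hexpC
  · -- small λ
    push_neg at hcase
    have hdist : dist (h • lam) 0 < δ := by
      rw [dist_zero_right, norm_smul, Real.norm_eq_abs, abs_of_pos hh0]
      calc h * ‖lam‖ ≤ (δ / (2 * M)) * ‖lam‖ :=
            mul_le_mul_of_nonneg_right (min_le_right _ _) hnorm0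
        _ ≤ (δ / (2 * M)) * M :=
            mul_le_mul_of_nonneg_left hcase.le (by positivity)
        _ = δ / 2 := by field_simp
        _ < δ := by linarith
    have hu : ‖1 - u (h • lam)‖ < ε / (B + 1) := by
      have := hδ hdist
      rwa [hu0, dist_eq_norm, ← norm_neg, neg_sub] at this
    have hBp : 0 < B + 1 := by linarith
    calc ‖f lam - f lam * u (h • lam)‖ * Real.exp (-ψ ‖lam‖)
        ≤ ‖f lam - f lam * u (h • lam)‖ * 1 := by
          apply mul_le_mul_of_nonneg_left _ (norm_nonneg _)
          rw [← Real.exp_zero]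
          exact Real.exp_le_exp.mpr (by linarith)
      _ = ‖f lam - f lam * u (h • lam)‖ := mul_one _
      _ ≤ B * ‖1 - u (h • lam)‖ := hbound
      _ ≤ B * (ε / (B + 1)) := mul_le_mul_of_nonneg_left hu.le hB0
      _ < ε := by
          rw [div_eq_inv_mul, ← mul_assoc]
          have : B * (B + 1)⁻¹ < 1 := by
            rw [mul_inv_lt_iff₀ hBp]; linarith
          calc B * (B + 1)⁻¹ * ε < 1 * ε := mul_lt_mul_of_pos_right this hε
            _ = ε := one_mul ε
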